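/- Let A¹ and A² be nonempty finite sets, R¹ ∈ ℝ^{A¹×A²}, R² ∈ ℝ^{A²×A¹}, and τ¹, τ² ≥ 0. Let r̲ and r̄ denote, respectively, the minimum and maximum entries of the matrix R¹ + (R²)ᵀ. Then r̲ ≤ val̄¹(R¹) + val̄²(R²) ≤ r̄. -/

import Mathlib

open Finset

noncomputable instance stdSimplexNonempty {A : Type*} [Fintype A] [Nonempty A] :
    Nonempty (stdSimplex ℝ A) := by
  classical
  exact ⟨⟨Pi.single (Classical.arbitrary A) 1, single_mem_stdSimplex ℝ _⟩⟩

/-- Expected payoff `μᵀ R ν` of the matrix game `R` under mixed strategies `μ, ν`. -/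
noncomputable def pay {A B : Type*} [Fintype A] [Fintype B]
    (R : A → B → ℝ) (μ : A → ℝ) (ν : B → ℝ) : ℝ :=
  ∑ a, ∑ b, μ a * R a b * ν b

/-- Shannon entropy `H(μ) = -∑ μ(a) log μ(a)` (note `Real.log 0 = 0` in Mathlib). -/
noncomputable def entropy {A : Type*} [Fintype A] (μ : A → ℝ) : ℝ :=
  -∑ a, μ a * Real.log (μ a)

/-- The zero-sum matrix-game value `val(R) = max_{μ∈Δ(A)} min_{ν∈Δ(B)} μᵀ R ν`. -/
noncomputable def matVal {A B : Type*} [Fintype A] [Fintype B] [Nonempty A] [Nonempty B]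
    (R : A → B → ℝ) : ℝ :=
  ⨆ μ : stdSimplex ℝ A, ⨅ ν : stdSimplex ℝ B, pay R μ.1 ν.1

/-- The entropy-regularized value
`val̄(R) = max_{μ∈Δ(A)} min_{ν∈Δ(B)} { μᵀ R ν + τ₁ H(μ) - τ₂ H(ν) }`. -/
noncomputable def regVal {A B : Type*} [Fintype A] [Fintype B] [Nonempty A] [Nonempty B]
    (τ1 τ2 : ℝ) (R : A → B → ℝ) : ℝ :=
  ⨆ μ : stdSimplex ℝ A, ⨅ ν : stdSimplex ℝ B,
    pay R μ.1 ν.1 + τ1 * entropy μ.1 - τ2 * entropy ν.1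

/-- Softmax (smoothed best response) with temperature `τ`. -/
noncomputable def softmax {A : Type*} [Fintype A] (τ : ℝ) (q : A → ℝ) : A → ℝ :=
  fun a => Real.exp (q a / τ) / ∑ b, Real.exp (q b / τ)

/-- Maximum norm of a matrix: the maximum of the absolute values of its entries. -/
noncomputable def matMaxNorm {A B : Type*} [Fintype A] [Fintype B] [Nonempty A] [Nonempty B]
    (M : A → B → ℝ) : ℝ :=
  (Finset.univ (α := A × B)).sup' univ_nonempty (fun ab => |M ab.1 ab.2|)

/-- Sup norm of a vector. -/
noncomputable def vecSupNorm {A : Type*} [Fintype A] [Nonempty A] (q : A → ℝ) : ℝ :=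
  Finset.univ.sup' univ_nonempty (fun a => |q a|)

set_option linter.unusedSectionVars false
set_option linter.unusedVariables false
section Aux

open Real

variable {A B : Type*} [Fintype A] [Fintype B] [Nonempty A] [Nonempty B]

lemma stdSimplex_nonempty'' : (stdSimplex ℝ A).Nonempty := by
  classical
  exact ⟨Pi.single (Classical.arbitrary A) 1, single_mem_stdSimplex ℝ _⟩

lemma continuous_entropy : Continuous (entropy (A := A)) := by
  unfold entropy
  exact (continuous_finset_sum _ fun a _ => Real.continuous_mul_log.comp (continuous_apply a)).neg

lemma entropy_nonneg {μ : A → ℝ} (hμ : μ ∈ stdSimplex ℝ A) : 0 ≤ entropy μ := by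
  unfold entropy
  rw [neg_nonneg]
  apply Finset.sum_nonpos
  intro a _
  have h1 : μ a ≤ 1 := by
    calc μ a ≤ ∑ b, μ b := Finset.single_le_sum (fun b _ => hμ.1 b) (mem_univ a)
    _ = 1 := hμ.2
  exact mul_nonpos_of_nonneg_of_nonpos (hμ.1 a) (Real.log_nonpos (hμ.1 a) h1)

lemma exists_entropy_bound (A : Type*) [Fintype A] [Nonempty A] :
    ∃ C, 0 ≤ C ∧ ∀ μ ∈ stdSimplex ℝ A, entropy μ ≤ C := by
  obtain ⟨x, hx, hmax⟩ := (isCompact_stdSimplex ℝ A).exists_isMaxOn stdSimplex_nonempty''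
    continuous_entropy.continuousOn
  exact ⟨max (entropy x) 0, le_max_right _ _, fun μ hμ => le_trans (hmax hμ) (le_max_left _ _)⟩

lemma continuous_pay (R : A → B → ℝ) :
    Continuous (fun p : (A → ℝ) × (B → ℝ) => pay R p.1 p.2) := by
  unfold pay
  exact continuous_finset_sum _ fun a _ => continuous_finset_sum _ fun b _ =>
    (((continuous_apply a).comp continuous_fst).mul continuous_const).mul
      ((continuous_apply b).comp continuous_snd)

lemma pay_eq_sum (R : A → B → ℝ) (μ : A → ℝ) (ν : B → ℝ) :
    pay R μ ν = ∑ b, (∑ a, μ a * R a b) * ν b := by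
  unfold pay
  rw [Finset.sum_comm]
  exact Finset.sum_congr rfl fun b _ => by rw [Finset.sum_mul]

lemma pay_swap (R : B → A → ℝ) (μ : A → ℝ) (ν : B → ℝ) :
    pay R ν μ = pay (fun a b => R b a) μ ν := by
  unfold pay
  rw [Finset.sum_comm]
  exact Finset.sum_congr rfl fun a _ => Finset.sum_congr rfl fun b _ => by ring

lemma pay_add (R S : A → B → ℝ) (μ : A → ℝ) (ν : B → ℝ) :
    pay (fun a b => R a b + S a b) μ ν = pay R μ ν + pay S μ ν := by
  unfold pay
  rw [← Finset.sum_add_distrib]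
  refine Finset.sum_congr rfl fun a _ => ?_
  rw [← Finset.sum_add_distrib]
  exact Finset.sum_congr rfl fun b _ => by ring

lemma le_pay {R : A → B → ℝ} {c : ℝ} (h : ∀ a b, c ≤ R a b) {μ : A → ℝ} {ν : B → ℝ}
    (hμ : μ ∈ stdSimplex ℝ A) (hν : ν ∈ stdSimplex ℝ B) : c ≤ pay R μ ν := by
  unfold pay
  calc c = ∑ a, μ a * c := by rw [← Finset.sum_mul, hμ.2, one_mul]
  _ ≤ ∑ a, ∑ b, μ a * R a b * ν b := by
      refine Finset.sum_le_sum fun a _ => ?_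
      calc μ a * c = (μ a * c) * ∑ b, ν b := by rw [hν.2, mul_one]
      _ = ∑ b, μ a * c * ν b := by rw [Finset.mul_sum]
      _ ≤ ∑ b, μ a * R a b * ν b := Finset.sum_le_sum fun b _ =>
          mul_le_mul_of_nonneg_right (mul_le_mul_of_nonneg_left (h a b) (hμ.1 a)) (hν.1 b)

lemma pay_le {R : A → B → ℝ} {c : ℝ} (h : ∀ a b, R a b ≤ c) {μ : A → ℝ} {ν : B → ℝ}
    (hμ : μ ∈ stdSimplex ℝ A) (hν : ν ∈ stdSimplex ℝ B) : pay R μ ν ≤ c := by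
  have := le_pay (R := fun a b => -R a b) (c := -c) (fun a b => neg_le_neg (h a b)) hμ hν
  have hneg : pay (fun a b => -R a b) μ ν = -pay R μ ν := by
    unfold pay
    rw [← Finset.sum_neg_distrib]
    refine Finset.sum_congr rfl fun a _ => ?_
    rw [← Finset.sum_neg_distrib]
    exact Finset.sum_congr rfl fun b _ => by ring
  linarith [this, hneg.le, hneg.ge]

lemma pay_affine (R : A → B → ℝ) (x y : A → ℝ) (ν : B → ℝ) (c d : ℝ) :
    pay R (fun a => c * x a + d * y a) ν = c * pay R x ν + d * pay R y ν := by
  unfold pay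
  rw [Finset.mul_sum, Finset.mul_sum, ← Finset.sum_add_distrib]
  refine Finset.sum_congr rfl fun a _ => ?_
  rw [Finset.mul_sum, Finset.mul_sum, ← Finset.sum_add_distrib]
  exact Finset.sum_congr rfl fun b _ => by ring

lemma entropy_concave_segment {μ ν : A → ℝ} (hμ : ∀ a, 0 ≤ μ a) (hν : ∀ a, 0 ≤ ν a)
    {t : ℝ} (ht0 : 0 ≤ t) (ht1 : t ≤ 1) :
    (1 - t) * entropy μ + t * entropy ν ≤ entropy (fun a => (1 - t) * μ a + t * ν a) := by
  have key : ∀ a ∈ Finset.univ (α := A),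
      ((1 - t) * μ a + t * ν a) * Real.log ((1 - t) * μ a + t * ν a)
        ≤ (1 - t) * (μ a * Real.log (μ a)) + t * (ν a * Real.log (ν a)) := by
    intro a _
    have := Real.convexOn_mul_log.2 (Set.mem_Ici.mpr (hμ a)) (Set.mem_Ici.mpr (hν a))
      (sub_nonneg.mpr ht1) ht0 (by ring)
    simpa [smul_eq_mul] using this
  have hsum := Finset.sum_le_sum key
  rw [Finset.sum_add_distrib, ← Finset.mul_sum, ← Finset.mul_sum] at hsum
  unfold entropy
  linarith

lemma softmax_pos {τ : ℝ} (q : A → ℝ) (a : A) : 0 < softmax τ q a :=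
  div_pos (Real.exp_pos _) (Finset.sum_pos (fun b _ => Real.exp_pos _) univ_nonempty)

lemma softmax_mem (τ : ℝ) (q : A → ℝ) : softmax τ q ∈ stdSimplex ℝ A := by
  refine ⟨fun a => (softmax_pos q a).le, ?_⟩
  unfold softmax
  rw [← Finset.sum_div, div_self (Finset.sum_pos (fun b _ => Real.exp_pos _) univ_nonempty).ne']

end Aux
section Gibbs

variable {A B : Type*} [Fintype A] [Fintype B] [Nonempty A] [Nonempty B]

lemma gibbs {b : ℝ} (hb : 0 < b) (q : B → ℝ) {ν : B → ℝ} (hν : ν ∈ stdSimplex ℝ B) :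
    (∑ j, q j * softmax b (fun k => -q k) j) - b * entropy (softmax b fun k => -q k)
      ≤ (∑ j, q j * ν j) - b * entropy ν := by
  have hZ : 0 < ∑ k, Real.exp (-q k / b) :=
    Finset.sum_pos (fun _ _ => Real.exp_pos _) univ_nonempty
  set Z : ℝ := ∑ k, Real.exp (-q k / b) with hZdef
  set σ : B → ℝ := softmax b (fun k => -q k) with hσdef
  have hσj : ∀ j, σ j = Real.exp (-q j / b) / Z := fun j => rfl
  have hσpos : ∀ j, 0 < σ j := fun j => softmax_pos _ j
  have hσsum : ∑ j, σ j = 1 := (softmax_mem b _).2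
  have hlog : ∀ j, Real.log (σ j) = -q j / b - Real.log Z := fun j => by
    rw [hσj, Real.log_div (Real.exp_ne_zero _) hZ.ne', Real.log_exp]
  -- value at σ
  have hA : (∑ j, q j * σ j) - b * entropy σ = -b * Real.log Z := by
    unfold entropy
    rw [mul_neg, sub_neg_eq_add, Finset.mul_sum, ← Finset.sum_add_distrib]
    have hc : ∀ j ∈ Finset.univ (α := B),
        q j * σ j + b * (σ j * Real.log (σ j)) = (-b * Real.log Z) * σ j := by
      intro j _
      rw [hlog j]
      field_simp
      ring
    rw [Finset.sum_congr rfl hc, ← Finset.mul_sum, hσsum, mul_one]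
  -- pointwise Gibbs inequality
  have key : ∀ j ∈ Finset.univ (α := B),
      ν j * Real.log (σ j) - ν j * Real.log (ν j) ≤ σ j - ν j := by
    intro j _
    rcases eq_or_lt_of_le (hν.1 j) with h0 | hpos
    · rw [← h0]
      simpa using (hσpos j).le
    · have hdiv : 0 < σ j / ν j := div_pos (hσpos j) hpos
      have hlog2 := Real.log_le_sub_one_of_pos hdiv
      rw [Real.log_div (hσpos j).ne' hpos.ne'] at hlog2
      have h3 := mul_le_mul_of_nonneg_left hlog2 hpos.le
      calc ν j * Real.log (σ j) - ν j * Real.log (ν j)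
          = ν j * (Real.log (σ j) - Real.log (ν j)) := by ring
        _ ≤ ν j * (σ j / ν j - 1) := h3
        _ = σ j - ν j := by field_simp
  have hsum := Finset.sum_le_sum key
  rw [Finset.sum_sub_distrib, Finset.sum_sub_distrib, hσsum, hν.2, sub_self] at hsum
  -- multiply through by b
  have hlogσ' : b * ∑ j, ν j * Real.log (σ j) = -(∑ j, q j * ν j) - b * Real.log Z := by
    rw [Finset.mul_sum]
    have hc : ∀ j ∈ Finset.univ (α := B),
        b * (ν j * Real.log (σ j)) = -(q j * ν j) - (b * Real.log Z) * ν j := by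
      intro j _
      rw [hlog j]
      field_simp
    rw [Finset.sum_congr rfl hc, Finset.sum_sub_distrib, ← Finset.mul_sum, hν.2, mul_one,
      ← Finset.sum_neg_distrib]
  have hsum' : ∑ j, ν j * Real.log (σ j) ≤ ∑ j, ν j * Real.log (ν j) := by linarith
  have hmul := mul_le_mul_of_nonneg_left hsum' hb.le
  rw [hlogσ'] at hmul
  have hE : b * ∑ j, ν j * Real.log (ν j) = -(b * entropy ν) := by
    unfold entropy
    ring
  rw [hE] at hmul
  rw [hA]
  linarith

end Gibbs
section Core

variable {A B : Type*} [Fintype A] [Fintype B] [Nonempty A] [Nonempty B]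

lemma lb_core (R : A → B → ℝ) {τ1 b : ℝ} (hτ1 : 0 ≤ τ1) (hb : 0 < b) :
    ∃ ν' ∈ stdSimplex ℝ B, ∀ μ' ∈ stdSimplex ℝ A,
      pay R μ' ν' + τ1 * entropy μ' - b * entropy ν' ≤ regVal τ1 b R := by
  classical
  set F : (A → ℝ) → (B → ℝ) → ℝ :=
    fun μ ν => pay R μ ν + τ1 * entropy μ - b * entropy ν with hF
  set q : (A → ℝ) → B → ℝ := fun μ j => ∑ a, μ a * R a j with hq
  set sm : (A → ℝ) → B → ℝ := fun μ => softmax b (fun j => -q μ j) with hsm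
  -- Gibbs: sm μ minimizes F μ · over the simplex
  have hGibbs : ∀ (μ : A → ℝ), ∀ ν ∈ stdSimplex ℝ B, F μ (sm μ) ≤ F μ ν := by
    intro μ ν hν
    have hg := gibbs hb (q μ) hν
    have e1 : pay R μ (sm μ) = ∑ j, q μ j * sm μ j := by
      rw [pay_eq_sum]
    have e2 : pay R μ ν = ∑ j, q μ j * ν j := by
      rw [pay_eq_sum]
    simp only [hF]
    rw [e1, e2]
    have : (∑ j, q μ j * sm μ j) - b * entropy (sm μ)
        ≤ (∑ j, q μ j * ν j) - b * entropy ν := hg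
    linarith
  -- continuity of μ ↦ sm μ
  have hqc : ∀ j, Continuous fun μ : A → ℝ => q μ j := fun j =>
    continuous_finset_sum _ fun a _ => (continuous_apply a).mul continuous_const
  have hZc : Continuous fun μ : A → ℝ => ∑ k, Real.exp (-q μ k / b) :=
    continuous_finset_sum _ fun k _ => (((hqc k).neg).div_const b).rexp
  have hsmCont : Continuous sm := by
    apply continuous_pi
    intro j
    show Continuous fun μ : A → ℝ => Real.exp (-q μ j / b) / ∑ k, Real.exp (-q μ k / b)
    exact (((hqc j).neg).div_const b).rexp.div hZc
      (fun μ => (Finset.sum_pos (fun _ _ => Real.exp_pos _) univ_nonempty).ne')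
  -- continuity of μ' ↦ F μ' (sm μ)  and of g μ := F μ (sm μ)
  have hFCont : ∀ (f g : (A → ℝ) → (A → ℝ)), Continuous f → Continuous g →
      Continuous fun μ => F (f μ) (sm (g μ)) := by
    intro f g hf hg
    simp only [hF]
    have h1 : Continuous fun μ => pay R (f μ) (sm (g μ)) :=
      (continuous_pay R).comp (hf.prodMk (hsmCont.comp hg))
    have h2 : Continuous fun μ => entropy (f μ) := continuous_entropy.comp hf
    have h3 : Continuous fun μ => entropy (sm (g μ)) :=
      continuous_entropy.comp (hsmCont.comp hg)
    exact (h1.add (continuous_const.mul h2)).sub (continuous_const.mul h3)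
  have hgc : Continuous fun μ => F μ (sm μ) := hFCont id id continuous_id continuous_id
  -- maximize g over the simplex
  obtain ⟨μs, hμs, hmax⟩ := (isCompact_stdSimplex ℝ A).exists_isMaxOn stdSimplex_nonempty''
    hgc.continuousOn
  refine ⟨sm μs, softmax_mem _ _, ?_⟩
  -- key saddle inequality
  have hkey : ∀ μh ∈ stdSimplex ℝ A, F μh (sm μs) ≤ F μs (sm μs) := by
    intro μh hμh
    set μt : ℝ → (A → ℝ) := fun t a => (1 - t) * μs a + t * μh a with hμt
    have hmem : ∀ t, 0 ≤ t → t ≤ 1 → μt t ∈ stdSimplex ℝ A := by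
      intro t h0 h1
      have hc := (convex_stdSimplex ℝ A) hμs hμh (sub_nonneg.mpr h1) h0 (by ring)
      have : μt t = (1 - t) • μs + t • μh := by
        funext a
        simp [hμt, Pi.smul_apply, smul_eq_mul]
      rw [this]
      exact hc
    have hstep : ∀ t ∈ Set.Ioc (0:ℝ) 1, F μh (sm (μt t)) ≤ F μs (sm μs) := by
      intro t ht
      have h1 : F (μt t) (sm (μt t)) ≤ F μs (sm μs) := hmax (hmem t ht.1.le ht.2)
      have h2 : F μs (sm μs) ≤ F μs (sm (μt t)) := hGibbs μs _ (softmax_mem _ _)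
      have hpay : pay R (μt t) (sm (μt t))
          = (1 - t) * pay R μs (sm (μt t)) + t * pay R μh (sm (μt t)) := by
        simp only [hμt]
        exact pay_affine R μs μh (sm (μt t)) (1 - t) t
      have hent : (1 - t) * entropy μs + t * entropy μh ≤ entropy (μt t) :=
        entropy_concave_segment hμs.1 hμh.1 ht.1.le ht.2
      have h3 : (1 - t) * F μs (sm (μt t)) + t * F μh (sm (μt t)) ≤ F (μt t) (sm (μt t)) := by
        simp only [hF]
        rw [hpay]
        nlinarith [mul_le_mul_of_nonneg_left hent hτ1]
      have h4 : t * F μh (sm (μt t)) ≤ t * F μs (sm μs) := by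
        nlinarith [mul_le_mul_of_nonneg_left h2 (sub_nonneg.mpr ht.2)]
      exact le_of_mul_le_mul_left h4 ht.1
    -- pass to the limit t → 0⁺
    have hμtc : Continuous fun t : ℝ => μt t := by
      apply continuous_pi
      intro a
      exact ((continuous_const.sub continuous_id).mul continuous_const).add
        (continuous_id.mul continuous_const)
    have hcont : Continuous fun t : ℝ => F μh (sm (μt t)) :=
      (hFCont (fun _ => μh) id continuous_const continuous_id).comp hμtc
    have hμt0 : μt 0 = μs := by
      funext a
      simp [hμt]
    have htends : Filter.Tendsto (fun t : ℝ => F μh (sm (μt t))) (nhdsWithin 0 (Set.Ioi 0))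
        (nhds (F μh (sm μs))) := by
      have := hcont.tendsto 0
      rw [hμt0] at this
      exact this.mono_left nhdsWithin_le_nhds
    exact le_of_tendsto htends (Filter.eventually_of_mem
      (Ioc_mem_nhdsGT zero_lt_one) hstep)
  -- relate to regVal
  intro μ' hμ'
  have hle1 : F μ' (sm μs) ≤ F μs (sm μs) := hkey μ' hμ'
  have hbddA : BddAbove (Set.range fun μ : stdSimplex ℝ A =>
      ⨅ ν : stdSimplex ℝ B, pay R μ.1 ν.1 + τ1 * entropy μ.1 - b * entropy ν.1) := by
    refine ⟨F μs (sm μs), ?_⟩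
    rintro x ⟨μ, rfl⟩
    have hbddB : BddBelow (Set.range fun ν : stdSimplex ℝ B =>
        pay R μ.1 ν.1 + τ1 * entropy μ.1 - b * entropy ν.1) := by
      refine ⟨F μ.1 (sm μ.1), ?_⟩
      rintro y ⟨ν, rfl⟩
      exact hGibbs μ.1 ν.1 ν.2
    have h5 : (⨅ ν : stdSimplex ℝ B, pay R μ.1 ν.1 + τ1 * entropy μ.1 - b * entropy ν.1)
        ≤ F μ.1 (sm μ.1) := by
      have := ciInf_le hbddB (⟨sm μ.1, softmax_mem _ _⟩ : stdSimplex ℝ B)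
      exact this
    exact h5.trans (hmax μ.2)
  have hinner : F μs (sm μs)
      ≤ ⨅ ν : stdSimplex ℝ B, pay R μs ν.1 + τ1 * entropy μs - b * entropy ν.1 :=
    le_ciInf fun ν => hGibbs μs ν.1 ν.2
  have hfinal : (⨅ ν : stdSimplex ℝ B, pay R μs ν.1 + τ1 * entropy μs - b * entropy ν.1)
      ≤ regVal τ1 b R := le_ciSup hbddA (⟨μs, hμs⟩ : stdSimplex ℝ A)
  exact hle1.trans (hinner.trans hfinal)

end Core
section Mono

variable {A B : Type*} [Fintype A] [Fintype B] [Nonempty A] [Nonempty B]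

set_option maxHeartbeats 1000000 in
lemma regVal_mono_snd (R : A → B → ℝ) {τa τb τb' : ℝ} (hτa : 0 ≤ τa) (hτb : 0 ≤ τb)
    (hle : τb ≤ τb') : regVal τa τb' R ≤ regVal τa τb R := by
  obtain ⟨C1, hC1n, hC1⟩ := exists_entropy_bound A
  obtain ⟨C2, hC2n, hC2⟩ := exists_entropy_bound B
  have hτb' : 0 ≤ τb' := hτb.trans hle
  set loR := (Finset.univ (α := A × B)).inf' univ_nonempty (fun ab => R ab.1 ab.2) with hloR
  set hiR := (Finset.univ (α := A × B)).sup' univ_nonempty (fun ab => R ab.1 ab.2) with hhiR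
  have hbddB : ∀ (τx : ℝ), 0 ≤ τx → ∀ μ : stdSimplex ℝ A,
      BddBelow (Set.range fun ν : stdSimplex ℝ B =>
        pay R μ.1 ν.1 + τa * entropy μ.1 - τx * entropy ν.1) := by
    intro τx hτx μ
    refine ⟨loR + τa * entropy μ.1 - τx * C2, ?_⟩
    rintro x ⟨ν, rfl⟩
    have h1 : loR ≤ pay R μ.1 ν.1 :=
      le_pay (fun a b => Finset.inf'_le (fun ab : A × B => R ab.1 ab.2) (Finset.mem_univ (a, b))) μ.2 ν.2
    have h2 : τx * entropy ν.1 ≤ τx * C2 := mul_le_mul_of_nonneg_left (hC2 ν.1 ν.2) hτx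
    show loR + τa * entropy μ.1 - τx * C2 ≤ pay R μ.1 ν.1 + τa * entropy μ.1 - τx * entropy ν.1
    linarith
  unfold regVal
  apply ciSup_mono
  · refine ⟨hiR + τa * C1, ?_⟩
    rintro x ⟨μ, rfl⟩
    obtain ⟨ν0, hν0⟩ := stdSimplex_nonempty'' (A := B)
    have h1 := ciInf_le (hbddB τb hτb μ) (⟨ν0, hν0⟩ : stdSimplex ℝ B)
    have h2 : pay R μ.1 ν0 ≤ hiR :=
      pay_le (fun a b => Finset.le_sup' (fun ab : A × B => R ab.1 ab.2) (Finset.mem_univ (a, b))) μ.2 hν0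
    have h3 : τa * entropy μ.1 ≤ τa * C1 := mul_le_mul_of_nonneg_left (hC1 μ.1 μ.2) hτa
    have h4 : 0 ≤ τb * entropy ν0 := mul_nonneg hτb (entropy_nonneg hν0)
    show (⨅ ν : stdSimplex ℝ B, pay R μ.1 ν.1 + τa * entropy μ.1 - τb * entropy ν.1)
      ≤ hiR + τa * C1
    linarith
  · intro μ
    apply ciInf_mono (hbddB τb' hτb' μ)
    intro ν
    have h5 : τb * entropy ν.1 ≤ τb' * entropy ν.1 :=
      mul_le_mul_of_nonneg_right hle (entropy_nonneg ν.2)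
    show pay R μ.1 ν.1 + τa * entropy μ.1 - τb' * entropy ν.1
      ≤ pay R μ.1 ν.1 + τa * entropy μ.1 - τb * entropy ν.1
    linarith

end Mono
set_option maxHeartbeats 1000000 in
theorem stmt_1 {A1 A2 : Type*} [Fintype A1] [Fintype A2] [Nonempty A1] [Nonempty A2]
    (R1 : A1 → A2 → ℝ) (R2 : A2 → A1 → ℝ) (τ1 τ2 : ℝ) (hτ1 : 0 ≤ τ1) (hτ2 : 0 ≤ τ2) :
    (Finset.univ (α := A1 × A2)).inf' univ_nonempty
        (fun ab => R1 ab.1 ab.2 + R2 ab.2 ab.1)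
      ≤ regVal τ1 τ2 R1 + regVal τ2 τ1 R2 ∧
    regVal τ1 τ2 R1 + regVal τ2 τ1 R2 ≤
      (Finset.univ (α := A1 × A2)).sup' univ_nonempty
        (fun ab => R1 ab.1 ab.2 + R2 ab.2 ab.1) := by
  classical
  obtain ⟨C1, hC1n, hC1⟩ := exists_entropy_bound A1
  obtain ⟨C2, hC2n, hC2⟩ := exists_entropy_bound A2
  constructor
  · -- LOWER BOUND
    have main : ∀ ε : ℝ, 0 < ε →
        (Finset.univ (α := A1 × A2)).inf' univ_nonempty
            (fun ab => R1 ab.1 ab.2 + R2 ab.2 ab.1)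
          ≤ regVal τ1 τ2 R1 + regVal τ2 τ1 R2 + ε * (C1 + C2) := by
      intro ε hε
      obtain ⟨ν', hν', hcore⟩ := lb_core R1 hτ1 (show (0:ℝ) < τ2 + ε by linarith)
      have hψc : Continuous fun μ' : A1 → ℝ =>
          pay R2 ν' μ' + τ2 * entropy ν' - (τ1 + ε) * entropy μ' := by
        have h1 : Continuous fun μ' : A1 → ℝ => pay R2 ν' μ' :=
          (continuous_pay R2).comp (continuous_const.prodMk continuous_id)
        exact (h1.add continuous_const).sub (continuous_const.mul continuous_entropy)
      obtain ⟨μh, hμh, hmin⟩ := (isCompact_stdSimplex ℝ A1).exists_isMinOn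
        stdSimplex_nonempty'' hψc.continuousOn
      have hstep : pay R2 ν' μh + τ2 * entropy ν' - (τ1 + ε) * entropy μh
          ≤ regVal τ2 (τ1 + ε) R2 := by
        unfold regVal
        have hinner : pay R2 ν' μh + τ2 * entropy ν' - (τ1 + ε) * entropy μh
            ≤ ⨅ μ : stdSimplex ℝ A1,
                pay R2 ν' μ.1 + τ2 * entropy ν' - (τ1 + ε) * entropy μ.1 :=
          le_ciInf fun μ => hmin μ.2
        have hbdd : BddAbove (Set.range fun ν : stdSimplex ℝ A2 =>
            ⨅ μ : stdSimplex ℝ A1,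
              pay R2 ν.1 μ.1 + τ2 * entropy ν.1 - (τ1 + ε) * entropy μ.1) := by
          refine ⟨(Finset.univ (α := A2 × A1)).sup' univ_nonempty (fun ab => R2 ab.1 ab.2)
            + τ2 * C2, ?_⟩
          rintro x ⟨ν, rfl⟩
          have hbb : BddBelow (Set.range fun μ : stdSimplex ℝ A1 =>
              pay R2 ν.1 μ.1 + τ2 * entropy ν.1 - (τ1 + ε) * entropy μ.1) := by
            refine ⟨(Finset.univ (α := A2 × A1)).inf' univ_nonempty (fun ab => R2 ab.1 ab.2)
              + τ2 * entropy ν.1 - (τ1 + ε) * C1, ?_⟩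
            rintro y ⟨μ, rfl⟩
            have h1 : (Finset.univ (α := A2 × A1)).inf' univ_nonempty
                (fun ab => R2 ab.1 ab.2) ≤ pay R2 ν.1 μ.1 :=
              le_pay (fun a b => Finset.inf'_le (fun ab : A2 × A1 => R2 ab.1 ab.2)
                (Finset.mem_univ (a, b))) ν.2 μ.2
            have h2 : (τ1 + ε) * entropy μ.1 ≤ (τ1 + ε) * C1 :=
              mul_le_mul_of_nonneg_left (hC1 μ.1 μ.2) (by linarith)
            show _ ≤ pay R2 ν.1 μ.1 + τ2 * entropy ν.1 - (τ1 + ε) * entropy μ.1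
            linarith
          have h3 := ciInf_le hbb (⟨μh, hμh⟩ : stdSimplex ℝ A1)
          have h4 : pay R2 ν.1 μh ≤ (Finset.univ (α := A2 × A1)).sup' univ_nonempty
              (fun ab => R2 ab.1 ab.2) :=
            pay_le (fun a b => Finset.le_sup' (fun ab : A2 × A1 => R2 ab.1 ab.2)
              (Finset.mem_univ (a, b))) ν.2 hμh
          have h5 : τ2 * entropy ν.1 ≤ τ2 * C2 := mul_le_mul_of_nonneg_left (hC2 ν.1 ν.2) hτ2
          have h6 : 0 ≤ (τ1 + ε) * entropy μh := mul_nonneg (by linarith) (entropy_nonneg hμh)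
          show (⨅ μ : stdSimplex ℝ A1,
              pay R2 ν.1 μ.1 + τ2 * entropy ν.1 - (τ1 + ε) * entropy μ.1) ≤ _
          linarith
        exact hinner.trans (le_ciSup hbdd (⟨ν', hν'⟩ : stdSimplex ℝ A2))
      have hcoreμ := hcore μh hμh
      have hS : (Finset.univ (α := A1 × A2)).inf' univ_nonempty
            (fun ab => R1 ab.1 ab.2 + R2 ab.2 ab.1)
          ≤ pay R1 μh ν' + pay R2 ν' μh := by
        rw [pay_swap R2 μh ν', ← pay_add]
        exact le_pay (fun a b => Finset.inf'_le
          (fun ab : A1 × A2 => R1 ab.1 ab.2 + R2 ab.2 ab.1) (Finset.mem_univ (a, b))) hμh hν'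
      have hmono1 : regVal τ1 (τ2 + ε) R1 ≤ regVal τ1 τ2 R1 :=
        regVal_mono_snd R1 hτ1 hτ2 (by linarith)
      have hmono2 : regVal τ2 (τ1 + ε) R2 ≤ regVal τ2 τ1 R2 :=
        regVal_mono_snd R2 hτ2 hτ1 (by linarith)
      have hb1 : ε * entropy ν' ≤ ε * C2 := mul_le_mul_of_nonneg_left (hC2 ν' hν') hε.le
      have hb2 : ε * entropy μh ≤ ε * C1 := mul_le_mul_of_nonneg_left (hC1 μh hμh) hε.le
      have hexp : ε * (C1 + C2) = ε * C1 + ε * C2 := by ring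
      linarith
    refine le_of_forall_pos_le_add ?_
    intro ε hε
    have h := main (ε / (C1 + C2 + 1)) (by positivity)
    have hle : ε / (C1 + C2 + 1) * (C1 + C2) ≤ ε := by
      rw [div_mul_eq_mul_div, div_le_iff₀ (by linarith)]
      nlinarith
    linarith
  · -- UPPER BOUND
    have key : ∀ (μ : stdSimplex ℝ A1) (ν : stdSimplex ℝ A2),
        (⨅ ν' : stdSimplex ℝ A2, pay R1 μ.1 ν'.1 + τ1 * entropy μ.1 - τ2 * entropy ν'.1)
        + (⨅ μ' : stdSimplex ℝ A1, pay R2 ν.1 μ'.1 + τ2 * entropy ν.1 - τ1 * entropy μ'.1)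
        ≤ (Finset.univ (α := A1 × A2)).sup' univ_nonempty
            (fun ab => R1 ab.1 ab.2 + R2 ab.2 ab.1) := by
      intro μ ν
      have hbb1 : BddBelow (Set.range fun ν' : stdSimplex ℝ A2 =>
          pay R1 μ.1 ν'.1 + τ1 * entropy μ.1 - τ2 * entropy ν'.1) := by
        refine ⟨(Finset.univ (α := A1 × A2)).inf' univ_nonempty (fun ab => R1 ab.1 ab.2)
          + τ1 * entropy μ.1 - τ2 * C2, ?_⟩
        rintro y ⟨ν0, rfl⟩
        have h1 : (Finset.univ (α := A1 × A2)).inf' univ_nonempty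
            (fun ab => R1 ab.1 ab.2) ≤ pay R1 μ.1 ν0.1 :=
          le_pay (fun a b => Finset.inf'_le (fun ab : A1 × A2 => R1 ab.1 ab.2)
            (Finset.mem_univ (a, b))) μ.2 ν0.2
        have h2 : τ2 * entropy ν0.1 ≤ τ2 * C2 := mul_le_mul_of_nonneg_left (hC2 ν0.1 ν0.2) hτ2
        show _ ≤ pay R1 μ.1 ν0.1 + τ1 * entropy μ.1 - τ2 * entropy ν0.1
        linarith
      have hbb2 : BddBelow (Set.range fun μ' : stdSimplex ℝ A1 =>
          pay R2 ν.1 μ'.1 + τ2 * entropy ν.1 - τ1 * entropy μ'.1) := by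
        refine ⟨(Finset.univ (α := A2 × A1)).inf' univ_nonempty (fun ab => R2 ab.1 ab.2)
          + τ2 * entropy ν.1 - τ1 * C1, ?_⟩
        rintro y ⟨μ0, rfl⟩
        have h1 : (Finset.univ (α := A2 × A1)).inf' univ_nonempty
            (fun ab => R2 ab.1 ab.2) ≤ pay R2 ν.1 μ0.1 :=
          le_pay (fun a b => Finset.inf'_le (fun ab : A2 × A1 => R2 ab.1 ab.2)
            (Finset.mem_univ (a, b))) ν.2 μ0.2
        have h2 : τ1 * entropy μ0.1 ≤ τ1 * C1 := mul_le_mul_of_nonneg_left (hC1 μ0.1 μ0.2) hτ1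
        show _ ≤ pay R2 ν.1 μ0.1 + τ2 * entropy ν.1 - τ1 * entropy μ0.1
        linarith
      have h1 := ciInf_le hbb1 ν
      have h2 := ciInf_le hbb2 μ
      have hS : pay R1 μ.1 ν.1 + pay R2 ν.1 μ.1
          ≤ (Finset.univ (α := A1 × A2)).sup' univ_nonempty
            (fun ab => R1 ab.1 ab.2 + R2 ab.2 ab.1) := by
        rw [pay_swap R2 μ.1 ν.1, ← pay_add]
        exact pay_le (fun a b => Finset.le_sup'
          (fun ab : A1 × A2 => R1 ab.1 ab.2 + R2 ab.2 ab.1) (Finset.mem_univ (a, b))) μ.2 ν.2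
      linarith
    unfold regVal
    have key2 : ∀ μ : stdSimplex ℝ A1,
        (⨆ ν : stdSimplex ℝ A2, ⨅ μ' : stdSimplex ℝ A1,
            pay R2 ν.1 μ'.1 + τ2 * entropy ν.1 - τ1 * entropy μ'.1)
          ≤ (Finset.univ (α := A1 × A2)).sup' univ_nonempty
              (fun ab => R1 ab.1 ab.2 + R2 ab.2 ab.1)
            - (⨅ ν' : stdSimplex ℝ A2,
                pay R1 μ.1 ν'.1 + τ1 * entropy μ.1 - τ2 * entropy ν'.1) :=
      fun μ => ciSup_le fun ν => by linarith [key μ ν]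
    have h4 : (⨆ μ : stdSimplex ℝ A1, ⨅ ν' : stdSimplex ℝ A2,
          pay R1 μ.1 ν'.1 + τ1 * entropy μ.1 - τ2 * entropy ν'.1)
        ≤ (Finset.univ (α := A1 × A2)).sup' univ_nonempty
            (fun ab => R1 ab.1 ab.2 + R2 ab.2 ab.1)
          - (⨆ ν : stdSimplex ℝ A2, ⨅ μ' : stdSimplex ℝ A1,
              pay R2 ν.1 μ'.1 + τ2 * entropy ν.1 - τ1 * entropy μ'.1) :=
      ciSup_le fun μ => by linarith [key2 μ]
    linarith
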